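/- For all natural numbers n and q, the number of area sequences of size n with area equal to q is equal to the number of area sequences of size n with dinv equal to q. -/

import Mathlib

/-- The `i`-th letter of the word `w` (`1`-indexed, as in the paper);
defaults to `0` out of range. -/
def get1 (w : List ℕ) (i : ℕ) : ℕ := w.getD (i - 1) 0

/-- `w` is the area sequence of a Dyck path: the first letter is `0` and each
letter exceeds the previous one by at most one. -/
def IsAreaSeq (w : List ℕ) : Prop :=
  (w ≠ [] → get1 w 1 = 0) ∧ ∀ i, 1 ≤ i → i < w.length → get1 w (i + 1) ≤ get1 w i + 1

/-- Insertion at position `i` (for `0 ≤ i ≤ n`): `ins w 0` prepends a `0`, and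
for `1 ≤ i ≤ n`, `ins w i` inserts the letter `w_i + 1` just after position `i`. -/
def ins (w : List ℕ) (i : ℕ) : List ℕ :=
  w.take i ++ (if i = 0 then 0 else get1 w i + 1) :: w.drop i

/-- The area statistic: the sum of the letters. -/
def area (w : List ℕ) : ℕ := w.sum

/-- The dinv statistic: `dinv w = Σ_i d_i` where `d_i` is the number of `j > i`
with `w_j = w_i` or `w_j = w_i - 1`. -/
def dinv (w : List ℕ) : ℕ :=
  ∑ i ∈ Finset.Icc 1 w.length,
    ((Finset.Ioc i w.length).filter
      (fun j => get1 w j = get1 w i ∨ get1 w j + 1 = get1 w i)).card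

/-- The maximal value of a word (`0` for the empty word). -/
def maxVal (w : List ℕ) : ℕ := w.foldr max 0

/-- Positions of the letters of maximal value `m`. -/
def Maxb (w : List ℕ) : Finset ℕ :=
  (Finset.Icc 1 w.length).filter (fun i => get1 w i = maxVal w)

/-- Positions `i` with `w_i = m - 1` such that all letters after position `i`
are `< m`. -/
def Maxa (w : List ℕ) : Finset ℕ :=
  (Finset.Icc 1 w.length).filter (fun i =>
    get1 w i + 1 = maxVal w ∧ ∀ j ∈ Finset.Ioc i w.length, get1 w j < maxVal w)

/-- The position of the leftmost letter equal to the maximal value `m` in the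
rightmost block of consecutive letters equal to `m`. -/
def i0 (w : List ℕ) : ℕ :=
  ((Finset.Icc 1 w.length).filter (fun i =>
    get1 w i = maxVal w ∧ (i = 1 ∨ get1 w (i - 1) ≠ maxVal w))).sup id

/-- The admissible insertion positions of `w`, listed in admissible order:
the elements of `Maxb w` in decreasing order, then the elements of `Maxa w`
in decreasing order, then `i0 w - 1`.  The empty word has the single
admissible insertion position `0`. -/
def admissible (w : List ℕ) : List ℕ :=
  if w = [] then [0]
  else ((Maxb w).sort (· ≤ ·)).reverse ++ ((Maxa w).sort (· ≤ ·)).reverse ++ [i0 w - 1]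

/-- Auxiliary version of the map `ψ`, reading the reversed word. -/
def psiRev : List ℕ → List ℕ
  | [] => []
  | a :: u => ins (psiRev u) ((admissible (psiRev u)).getD a 0)

/-- The map `ψ`: `ψ(ε) = ε` and `ψ(u a) = ins_{c_a}(ψ(u))` where
`c_0, c_1, …, c_k` are the admissible insertion positions of `ψ(u)` in
admissible order. -/
def psi (w : List ℕ) : List ℕ := psiRev w.reverse

/-- The bounce sequence: `b_1 = 0`, and `b_i = b_{i-1} + 1` if
`b_{i-1} + 1 ≤ w_i`, otherwise `b_i = 0`. -/
def bseq (w : List ℕ) : ℕ → ℕ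
  | 0 => 0
  | 1 => 0
  | (i + 2) => if bseq w (i + 1) + 1 ≤ get1 w (i + 2) then bseq w (i + 1) + 1 else 0

/-- The bounces of `w`: positions `1 < i ≤ n` with `b_i = 0`. -/
def bounces (w : List ℕ) : Finset ℕ :=
  (Finset.Icc 2 w.length).filter (fun i => bseq w i = 0)

/-- The bounce statistic: the sum of the reversed positions `n - i + 1` of the
bounces of `w`. -/
def bounce (w : List ℕ) : ℕ := ∑ i ∈ bounces w, (w.length - i + 1)

/-! ### own defs -/

def AS (w : List ℕ) : Prop := w.headD 0 = 0 ∧ w.IsChain (fun a b => b ≤ a + 1)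

def pr (c : ℕ) (b : ℕ) : Bool := (b == c) || (b + 1 == c)

def dinvL : List ℕ → ℕ
  | [] => 0
  | a :: w => w.countP (pr a) + dinvL w

lemma AS_iff (w : List ℕ) : IsAreaSeq w ↔ AS w := by
  constructor
  · rintro ⟨h0, h1⟩
    constructor
    · cases w with
      | nil => rfl
      | cons a w => exact h0 (by simp)
    · rw [List.isChain_iff_getElem]
      intro k hk
      have := h1 (k+1) (by omega) (by omega)
      simp only [get1, Nat.add_sub_cancel] at this
      simpa [List.getD_eq_getElem?_getD, List.getElem?_eq_getElem, List.get_eq_getElem,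
        (by omega : k < w.length), (by omega : k + 1 < w.length)] using this
  · rintro ⟨h0, h1⟩
    constructor
    · intro hw
      cases w with
      | nil => simp at hw
      | cons a w => simpa [get1] using h0
    · intro i hi hlen
      rw [List.isChain_iff_getElem] at h1
      have := h1 (i - 1) (by omega)
      simp only [get1, Nat.add_sub_cancel, List.get_eq_getElem] at this ⊢
      have h2 : i - 1 + 1 = i := by omega
      simp only [List.getD_eq_getElem?_getD, List.getElem?_eq_getElem, (by omega : i < w.length),
        (by omega : i - 1 < w.length), Option.getD_some]
      have h3 : w[i - 1 + 1]'(by omega) = w[i]'(by omega) := by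
        simp only [h2]
      rw [← h3]
      exact this

lemma card_filter_getD (P : ℕ → Bool) (w : List ℕ) :
    ((Finset.range w.length).filter (fun j => P (w.getD j 0))).card = w.countP P := by
  induction w with
  | nil => simp
  | cons a w ih =>
    rw [Finset.card_filter] at ih ⊢
    simp only [List.length_cons, List.countP_cons]
    rw [Finset.sum_range_succ']
    simp only [List.getD_cons_succ, List.getD_cons_zero, ih]

lemma pr_iff (c b : ℕ) : pr c b = true ↔ (b = c ∨ b + 1 = c) := by
  simp [pr]

lemma getD_drop (w : List ℕ) (i k : ℕ) : (w.drop i).getD k 0 = w.getD (i + k) 0 := by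
  simp [List.getD_eq_getElem?_getD, List.getElem?_drop]

lemma card_Ioc_filter (w : List ℕ) (i c : ℕ) :
    ((Finset.Ioc i w.length).filter (fun j => get1 w j = c ∨ get1 w j + 1 = c)).card
      = (w.drop i).countP (pr c) := by
  classical
  rw [← card_filter_getD (pr c) (w.drop i)]
  apply Finset.card_bij' (fun j _ => j - (i + 1)) (fun k _ => k + (i + 1))
  · intro j hj
    simp only [Finset.mem_filter, Finset.mem_Ioc] at hj
    simp only [Finset.mem_filter, Finset.mem_range, List.length_drop]
    refine ⟨by omega, ?_⟩
    rw [pr_iff, getD_drop]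
    have : i + (j - (i + 1)) = j - 1 := by omega
    rw [this]
    exact hj.2
  · intro k hk
    simp only [Finset.mem_filter, Finset.mem_range, List.length_drop] at hk
    simp only [Finset.mem_filter, Finset.mem_Ioc]
    refine ⟨⟨by omega, by omega⟩, ?_⟩
    rw [pr_iff, getD_drop] at hk
    have : i + k = k + (i + 1) - 1 := by omega
    rw [this] at hk
    exact hk.2
  · intro j hj
    simp only [Finset.mem_filter, Finset.mem_Ioc] at hj
    omega
  · intro k hk
    simp only [Finset.mem_filter, Finset.mem_range] at hk
    omega

lemma dinv_eq_dinvL (w : List ℕ) : dinv w = dinvL w := by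
  have step1 : dinv w = ∑ i ∈ Finset.Icc 1 w.length, (w.drop i).countP (pr (get1 w i)) := by
    unfold dinv
    exact Finset.sum_congr rfl (fun i _ => card_Ioc_filter w i (get1 w i))
  have step2 : dinv w = ∑ k ∈ Finset.range w.length, (w.drop (k+1)).countP (pr (w.getD k 0)) := by
    rw [step1]
    apply Finset.sum_nbij' (fun i => i - 1) (fun k => k + 1)
    · intro i hi; simp only [Finset.mem_Icc] at hi; simp only [Finset.mem_range]; omega
    · intro k hk; simp only [Finset.mem_range] at hk; simp only [Finset.mem_Icc]; omega
    · intro i hi; simp only [Finset.mem_Icc] at hi; omega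
    · intro k hk; omega
    · intro i hi
      simp only [Finset.mem_Icc] at hi
      have h1 : i - 1 + 1 = i := by omega
      rw [h1]
      rfl
  rw [step2]
  clear step1 step2
  induction w with
  | nil => simp [dinvL]
  | cons a w ih =>
    simp only [List.length_cons]
    rw [Finset.sum_range_succ']
    simp only [List.getD_cons_succ, List.getD_cons_zero, List.drop_succ_cons]
    rw [ih]
    simp [dinvL, Nat.add_comm]

/-! ### maxVal and splitting -/

lemma maxVal_cons (a : ℕ) (w : List ℕ) : maxVal (a :: w) = max a (maxVal w) := rfl

lemma le_maxVal {b : ℕ} {w : List ℕ} (h : b ∈ w) : b ≤ maxVal w := by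
  induction w with
  | nil => simp at h
  | cons a w ih =>
    rcases List.mem_cons.1 h with rfl | h
    · simp [maxVal_cons]
    · simp only [maxVal_cons]
      exact le_trans (ih h) (le_max_right _ _)

lemma maxVal_append (p q : List ℕ) : maxVal (p ++ q) = max (maxVal p) (maxVal q) := by
  induction p with
  | nil => simp [maxVal]
  | cons a p ih => simp [List.cons_append, maxVal_cons, ih, max_assoc]

lemma maxVal_mem {w : List ℕ} (h : w ≠ []) : maxVal w ∈ w := by
  induction w with
  | nil => simp at h
  | cons a w ih =>
    rcases eq_or_ne w [] with rfl | hw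
    · simp [maxVal_cons, maxVal]
    · rw [maxVal_cons]
      rcases max_cases a (maxVal w) with ⟨h1, _⟩ | ⟨h1, _⟩
      · rw [h1]; exact List.mem_cons_self
      · rw [h1]; exact List.mem_cons_of_mem _ (ih hw)

lemma maxVal_le {w : List ℕ} {c : ℕ} (h : ∀ b ∈ w, b ≤ c) : maxVal w ≤ c := by
  induction w with
  | nil => simp [maxVal]
  | cons a w ih =>
    rw [maxVal_cons, max_le_iff]
    exact ⟨h a (by simp), ih fun b hb => h b (List.mem_cons_of_mem _ hb)⟩

lemma splitLast {w : List ℕ} {m : ℕ} (h : m ∈ w) : ∃ p s, w = p ++ m :: s ∧ m ∉ s := by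
  induction w using List.reverseRecOn with
  | nil => simp at h
  | append_singleton w a ih =>
    rcases eq_or_ne a m with rfl | ha
    · exact ⟨w, [], by simp⟩
    · have hm : m ∈ w := by
        rcases List.mem_append.1 h with h | h
        · exact h
        · simp at h; omega
      obtain ⟨p, s, rfl, hs⟩ := ih hm
      exact ⟨p, s ++ [a], by simp, by simp [hs, ha.symm]⟩

lemma takeWhile_split {p : ℕ → Bool} {l₁ l₂ : List ℕ} {a : ℕ} (h₁ : ∀ b ∈ l₁, p b = true)
    (h₂ : p a = false) : (l₁ ++ a :: l₂).takeWhile p = l₁ ∧ (l₁ ++ a :: l₂).dropWhile p = a :: l₂ := by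
  induction l₁ with
  | nil => simp [List.takeWhile, List.dropWhile, h₂]
  | cons b l₁ ih =>
    have hb : p b = true := h₁ b (by simp)
    have := ih (fun c hc => h₁ c (List.mem_cons_of_mem _ hc))
    simp [List.takeWhile, List.dropWhile, hb, this.1, this.2]

/-! ### parent, suffix, capD -/

def parent (w : List ℕ) : List ℕ := (w.reverse.erase (maxVal w)).reverse

def suffM (w : List ℕ) : List ℕ := (w.reverse.takeWhile (· != maxVal w)).reverse

def capD (w : List ℕ) : ℕ := w.count (maxVal w) + (suffM w).count (maxVal w - 1)

lemma parent_eq {v p s : List ℕ} {m : ℕ} (hv : v = p ++ m :: s) (hm : maxVal v = m)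
    (hs : m ∉ s) : parent v = p ++ s := by
  subst hv
  rw [parent, hm, List.reverse_append, List.reverse_cons, List.append_assoc,
    List.erase_append_right _ (by simp [hs]), List.erase_append_left _ (by simp),
    List.erase_cons_head]
  simp

lemma suffM_eq {v p s : List ℕ} {m : ℕ} (hv : v = p ++ m :: s) (hm : maxVal v = m)
    (hs : m ∉ s) : suffM v = s := by
  subst hv
  rw [suffM, hm, List.reverse_append, List.reverse_cons, List.append_assoc]
  have := takeWhile_split (p := (· != m)) (l₁ := s.reverse) (l₂ := p.reverse) (a := m)
    (fun b hb => by simp; intro h; exact hs (h ▸ (List.mem_reverse.1 hb))) (by simp)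
  rw [List.singleton_append, this.1, List.reverse_reverse]

/-! ### children -/

def insA (u : List ℕ) (j x : ℕ) : List ℕ := u.take (j+1) ++ x :: u.drop (j+1)

def vIII (u : List ℕ) : List ℕ :=
  (u.reverse.takeWhile (· != maxVal u) ++ maxVal u :: u.reverse.dropWhile (· != maxVal u)).reverse

def MbF (u : List ℕ) : Finset ℕ :=
  (Finset.range u.length).filter (fun j => u.getD j 0 = maxVal u)

def MaF (u : List ℕ) : Finset ℕ :=
  (Finset.range u.length).filter
    (fun j => u.getD j 0 + 1 = maxVal u ∧ maxVal u ∉ u.drop (j+1))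

noncomputable def childrenF (u : List ℕ) : Finset (List ℕ) :=
  ((MbF u).image (fun j => insA u j (maxVal u + 1)) ∪
    (MaF u).image (fun j => insA u j (maxVal u))) ∪ {vIII u}

lemma vIII_eq {u p s : List ℕ} {m : ℕ} (hu : u = p ++ m :: s) (hm : maxVal u = m)
    (hs : m ∉ s) : vIII u = p ++ m :: m :: s := by
  have h1 := takeWhile_split (p := (· != m)) (l₁ := s.reverse) (l₂ := p.reverse) (a := m)
    (fun b hb => by simp; intro h; exact hs (h ▸ (List.mem_reverse.1 hb))) (by simp)
  have hrev : (p ++ m :: s).reverse = s.reverse ++ m :: p.reverse := by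
    rw [List.reverse_append, List.reverse_cons, List.append_assoc, List.singleton_append]
  rw [vIII, hm, hu, hrev, h1.1, h1.2]
  simp

def qr (x : ℕ) (b : ℕ) : Bool := (b == x) || (b == x + 1)

lemma pr_qr (a x : ℕ) : pr a x = qr x a := by
  rw [Bool.eq_iff_iff]
  simp only [pr, qr, Bool.or_eq_true, beq_iff_eq]
  omega

lemma dinvL_append_cons (A B : List ℕ) (x : ℕ) :
    dinvL (A ++ x :: B) = dinvL (A ++ B) + A.countP (qr x) + B.countP (pr x) := by
  induction A with
  | nil => simp [dinvL]; ring
  | cons a A ih =>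
    show List.countP (pr a) (A ++ x :: B) + dinvL (A ++ x :: B)
        = List.countP (pr a) (A ++ B) + dinvL (A ++ B) + List.countP (qr x) (a :: A)
          + List.countP (pr x) B
    rw [ih, List.countP_append, List.countP_cons, List.countP_append, List.countP_cons, pr_qr a x]
    ring

/-! ### countP helpers -/

lemma countP_qr_lt {l : List ℕ} {x : ℕ} (h : ∀ b ∈ l, b < x) : l.countP (qr x) = 0 := by
  rw [List.countP_eq_zero]
  intro b hb
  have := h b hb
  simp [qr]
  omega

lemma countP_qr_le {l : List ℕ} {x : ℕ} (h : ∀ b ∈ l, b ≤ x) : l.countP (qr x) = l.count x := by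
  rw [List.count_eq_countP]
  apply List.countP_congr
  intro b hb
  have := h b hb
  simp [qr]
  omega

lemma countP_pr_succ {l : List ℕ} {x : ℕ} (h : ∀ b ∈ l, b ≤ x) :
    l.countP (pr (x+1)) = l.count x := by
  rw [List.count_eq_countP]
  apply List.countP_congr
  intro b hb
  have := h b hb
  simp [pr]
  omega

lemma countP_pr_notmem {l : List ℕ} {x : ℕ} (h : x ∉ l) :
    l.countP (pr x) = l.count (x - 1) := by
  rw [List.count_eq_countP]
  apply List.countP_congr
  intro b hb
  have : b ≠ x := fun hbx => h (hbx ▸ hb)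
  simp [pr]
  omega

/-! ### the insertion specification -/

lemma headD_append {A l : List ℕ} (h : A ≠ []) : (A ++ l).headD 0 = A.headD 0 := by
  cases A with
  | nil => simp at h
  | cons a A => simp

lemma take_ne_nil {u : List ℕ} {j : ℕ} (hj : j < u.length) : u.take (j+1) ≠ [] := by
  have : (u.take (j+1)).length = j + 1 := by
    rw [List.length_take]; omega
  intro hcon
  rw [hcon] at this
  simp at this

lemma getLast?_take {u : List ℕ} {j : ℕ} (hj : j < u.length) :
    (u.take (j+1)).getLast? = some (u.getD j 0) := by
  have hlen : (u.take (j+1)).length = j + 1 := by rw [List.length_take]; omega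
  rw [List.getLast?_eq_getElem?, hlen, Nat.add_sub_cancel, List.getElem?_eq_getElem
    (by omega), List.getElem_take, List.getD_eq_getElem?_getD, List.getElem?_eq_getElem hj]
  rfl

lemma AS_insA {u : List ℕ} {j x : ℕ} (hAS : AS u) (hj : j < u.length)
    (hx : x ≤ u.getD j 0 + 1) (hnext : ∀ y ∈ u, y ≤ x + 1) : AS (insA u j x) := by
  obtain ⟨h0, hc⟩ := hAS
  constructor
  · rw [insA, headD_append (take_ne_nil hj)]
    rw [← List.take_append_drop (j+1) u, headD_append (take_ne_nil hj)] at h0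
    exact h0
  · rw [insA, List.isChain_append]
    refine ⟨hc.infix (List.take_prefix _ _).isInfix, ?_, ?_⟩
    · rw [List.isChain_cons]
      refine ⟨?_, hc.infix (List.drop_suffix _ _).isInfix⟩
      intro y hy
      exact hnext y ((List.drop_suffix (j+1) u).subset (List.mem_of_mem_head? hy))
    · intro a ha y hy
      rw [getLast?_take hj] at ha
      simp only [Option.mem_def, Option.some.injEq] at ha
      simp only [List.head?_cons, Option.mem_def, Option.some.injEq] at hy
      subst ha; subst hy
      exact hx

lemma insA_spec {u : List ℕ} {j x : ℕ} (hAS : AS u) (hj : j < u.length)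
    (hx : x ≤ u.getD j 0 + 1) (hmax : maxVal u ≤ x) (hxB : x ∉ u.drop (j+1)) :
    AS (insA u j x) ∧ (insA u j x).length = u.length + 1 ∧ parent (insA u j x) = u ∧
    maxVal (insA u j x) = x ∧
    capD (insA u j x) =
      (u.take (j+1)).count x + (u.drop (j+1)).count x + 1 + (u.drop (j+1)).count (x-1) ∧
    dinvL (insA u j x) = dinvL u + (u.take (j+1)).countP (qr x) + (u.drop (j+1)).countP (pr x) := by
  have hu : u.take (j+1) ++ u.drop (j+1) = u := List.take_append_drop (j+1) u
  have hmaxv : maxVal (insA u j x) = x := by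
    rw [insA, maxVal_append, maxVal_cons]
    have h1 : maxVal (u.take (j+1)) ≤ maxVal u :=
      maxVal_le fun b hb => le_maxVal ((List.take_prefix _ _).subset hb)
    have h2 : maxVal (u.drop (j+1)) ≤ maxVal u :=
      maxVal_le fun b hb => le_maxVal ((List.drop_suffix _ _).subset hb)
    omega
  refine ⟨AS_insA hAS hj hx (fun y hy => by have := le_maxVal hy; omega), ?_, ?_, hmaxv, ?_, ?_⟩
  · rw [insA, List.length_append, List.length_cons, List.length_take, List.length_drop]
    omega
  · rw [insA] at hmaxv ⊢
    rw [parent_eq rfl hmaxv hxB, hu]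
  · rw [insA] at hmaxv ⊢
    rw [capD, hmaxv, suffM_eq rfl hmaxv hxB, List.count_append, List.count_cons_self]
    ring
  · rw [insA, dinvL_append_cons, hu]

/-! ### per-type child lemmas -/

lemma mem_MbF {u : List ℕ} {j : ℕ} : j ∈ MbF u ↔ j < u.length ∧ u.getD j 0 = maxVal u := by
  simp [MbF]

lemma mem_MaF {u : List ℕ} {j : ℕ} :
    j ∈ MaF u ↔ j < u.length ∧ u.getD j 0 + 1 = maxVal u ∧ maxVal u ∉ u.drop (j+1) := by
  simp [MaF, and_assoc]

lemma take_le_max {u : List ℕ} {j : ℕ} : ∀ b ∈ u.take j, b ≤ maxVal u :=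
  fun b hb => le_maxVal ((List.take_prefix _ _).subset hb)

lemma drop_le_max {u : List ℕ} {j : ℕ} : ∀ b ∈ u.drop j, b ≤ maxVal u :=
  fun b hb => le_maxVal ((List.drop_suffix _ _).subset hb)

lemma count_take_drop (u : List ℕ) (j y : ℕ) :
    u.count y = (u.take j).count y + (u.drop j).count y := by
  have h := List.count_append (a := y) (l₁ := u.take j) (l₂ := u.drop j)
  rw [List.take_append_drop] at h
  exact h

lemma typeI_spec {u : List ℕ} {j : ℕ} (hAS : AS u) (hj : j ∈ MbF u) :
    AS (insA u j (maxVal u + 1)) ∧ (insA u j (maxVal u + 1)).length = u.length + 1 ∧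
    parent (insA u j (maxVal u + 1)) = u ∧
    capD (insA u j (maxVal u + 1)) = (u.drop (j+1)).count (maxVal u) + 1 ∧
    dinvL (insA u j (maxVal u + 1)) = dinvL u + (u.drop (j+1)).count (maxVal u) := by
  obtain ⟨hjlen, hjval⟩ := mem_MbF.1 hj
  obtain ⟨s1, s2, s3, s4, s5, s6⟩ := insA_spec (x := maxVal u + 1) hAS hjlen (by omega) (by omega)
    (fun hmem => by have := drop_le_max _ hmem; omega)
  refine ⟨s1, s2, s3, ?_, ?_⟩
  · rw [s5, List.count_eq_zero_of_not_mem (fun hmem => by have := take_le_max _ hmem; omega),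
      List.count_eq_zero_of_not_mem (fun hmem => by have := drop_le_max _ hmem; omega),
      Nat.add_sub_cancel]
    omega
  · rw [s6, countP_qr_lt (fun b hb => by have := take_le_max b hb; omega),
      countP_pr_succ (fun b hb => drop_le_max b hb)]
    omega

lemma typeII_spec {u : List ℕ} {j : ℕ} (hAS : AS u) (hj : j ∈ MaF u) :
    AS (insA u j (maxVal u)) ∧ (insA u j (maxVal u)).length = u.length + 1 ∧
    parent (insA u j (maxVal u)) = u ∧
    capD (insA u j (maxVal u)) = u.count (maxVal u) + (u.drop (j+1)).count (maxVal u - 1) + 1 ∧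
    dinvL (insA u j (maxVal u)) =
      dinvL u + u.count (maxVal u) + (u.drop (j+1)).count (maxVal u - 1) := by
  obtain ⟨hjlen, hjval, hnm⟩ := mem_MaF.1 hj
  obtain ⟨s1, s2, s3, s4, s5, s6⟩ := insA_spec (x := maxVal u) hAS hjlen (by omega) (le_refl _) hnm
  have hcnt : (u.take (j+1)).count (maxVal u) = u.count (maxVal u) := by
    rw [count_take_drop u (j+1) (maxVal u), List.count_eq_zero_of_not_mem hnm]
    omega
  refine ⟨s1, s2, s3, ?_, ?_⟩
  · rw [s5, hcnt, List.count_eq_zero_of_not_mem hnm]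
    omega
  · rw [s6, countP_qr_le (fun b hb => take_le_max b hb), countP_pr_notmem hnm, hcnt]

lemma typeIII_spec {u : List ℕ} (hAS : AS u) (hne : u ≠ []) :
    AS (vIII u) ∧ (vIII u).length = u.length + 1 ∧ parent (vIII u) = u ∧
    capD (vIII u) = capD u + 1 ∧ dinvL (vIII u) = dinvL u + capD u := by
  obtain ⟨p, s, hu, hs⟩ := splitLast (maxVal_mem hne)
  have htake : u.take (p.length + 1) = p ++ [maxVal u] := by
    conv_lhs => rw [hu, List.take_length_add_append 1]
    simp
  have hdrop : u.drop (p.length + 1) = s := by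
    conv_lhs => rw [hu, List.drop_length_add_append 1]
    simp
  have hgetD : u.getD p.length 0 = maxVal u := by
    conv_lhs => rw [hu, List.getD_append_right _ _ _ _ (le_refl _), Nat.sub_self]
    rfl
  have hlen : p.length < u.length := by
    conv_rhs => rw [hu]
    simp
  have hveq : vIII u = insA u p.length (maxVal u) := by
    rw [vIII_eq hu rfl hs, insA, htake, hdrop]
    simp
  obtain ⟨s1, s2, s3, s4, s5, s6⟩ :=
    insA_spec (x := maxVal u) hAS hlen (by omega) (le_refl _) (by rw [hdrop]; exact hs)
  rw [hveq]
  have hcnt : u.count (maxVal u) = p.count (maxVal u) + 1 := by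
    have h1 := List.count_append (a := maxVal u) (l₁ := p) (l₂ := maxVal u :: s)
    rw [← hu, List.count_cons_self, List.count_eq_zero_of_not_mem hs] at h1
    omega
  have hcapu : capD u = p.count (maxVal u) + 1 + s.count (maxVal u - 1) := by
    rw [capD, suffM_eq hu rfl hs, hcnt]
  refine ⟨s1, s2, s3, ?_, ?_⟩
  · rw [s5, htake, hdrop, List.count_append, List.count_eq_zero_of_not_mem hs, hcapu,
      List.count_cons_self, List.count_nil]
    omega
  · rw [s6, countP_qr_le (fun b hb => take_le_max b hb), countP_pr_notmem (hdrop ▸ hs),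
      htake, hdrop, List.count_append, List.count_cons_self, List.count_nil, hcapu]
    omega

/-! ### rank bijection -/

lemma getD_mem {l : List ℕ} {k : ℕ} (h : k < l.length) : l.getD k 0 ∈ l := by
  rw [List.getD_eq_getElem?_getD, List.getElem?_eq_getElem h]
  exact List.getElem_mem _

lemma getD_take {l : List ℕ} {k n : ℕ} (hkn : k < n) (hkl : k < l.length) :
    (l.take n).getD k 0 = l.getD k 0 := by
  have h1 : k < (l.take n).length := by rw [List.length_take]; omega
  rw [List.getD_eq_getElem?_getD, List.getD_eq_getElem?_getD, List.getElem?_eq_getElem h1,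
    List.getElem?_eq_getElem hkl]
  simp [List.getElem_take]

lemma count_drop_lt {u : List ℕ} {y t j : ℕ} (ht : t ≤ j) (hj : j < u.length)
    (hval : u.getD j 0 = y) : (u.drop (j+1)).count y < (u.drop t).count y := by
  have hlen : (u.drop t).length = u.length - t := List.length_drop
  have hdd : (u.drop t).drop (j+1-t) = u.drop (j+1) := by
    rw [List.drop_drop]
    congr 1
    omega
  have hsplit := count_take_drop (u.drop t) (j+1-t) y
  rw [hdd] at hsplit
  have hmem : y ∈ (u.drop t).take (j+1-t) := by
    have h1 : ((u.drop t).take (j+1-t)).getD (j-t) 0 = y := by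
      rw [getD_take (by omega) (by omega), getD_drop]
      rw [show t + (j - t) = j by omega]
      exact hval
    rw [← h1]
    apply getD_mem
    rw [List.length_take]
    omega
  have := List.count_pos_iff.2 hmem
  omega

lemma rank_card {u : List ℕ} (y t : ℕ) :
    ((Finset.range u.length).filter (fun j => t ≤ j ∧ u.getD j 0 = y)).card
      = (u.drop t).count y := by
  rw [List.count_eq_countP, ← card_filter_getD (· == y) (u.drop t)]
  apply Finset.card_bij' (fun j _ => j - t) (fun k _ => k + t)
  · intro j hj
    simp only [Finset.mem_filter, Finset.mem_range] at hj ⊢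
    rw [List.length_drop]
    refine ⟨by omega, ?_⟩
    rw [getD_drop, show t + (j - t) = j by omega]
    simpa using hj.2.2
  · intro k hk
    simp only [Finset.mem_filter, Finset.mem_range, List.length_drop] at hk ⊢
    obtain ⟨hk1, hk2⟩ := hk
    rw [getD_drop] at hk2
    refine ⟨by omega, by omega, ?_⟩
    rw [show k + t = t + k by omega]
    simpa using hk2
  · intro j hj
    simp only [Finset.mem_filter, Finset.mem_range] at hj
    omega
  · intro k _
    omega

lemma rank_image {u : List ℕ} (y t : ℕ) :
    ((Finset.range u.length).filter (fun j => t ≤ j ∧ u.getD j 0 = y)).image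
        (fun j => (u.drop (j+1)).count y)
      = Finset.range ((u.drop t).count y) := by
  set S := (Finset.range u.length).filter (fun j => t ≤ j ∧ u.getD j 0 = y) with hS
  have hsub : S.image (fun j => (u.drop (j+1)).count y) ⊆ Finset.range ((u.drop t).count y) := by
    intro x hx
    obtain ⟨j, hj, rfl⟩ := Finset.mem_image.1 hx
    simp only [hS, Finset.mem_filter, Finset.mem_range] at hj
    exact Finset.mem_range.2 (count_drop_lt hj.2.1 hj.1 hj.2.2)
  have hinj : Set.InjOn (fun j => (u.drop (j+1)).count y) S := by
    intro j hj j' hj' heq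
    simp only [hS, Finset.coe_filter, Set.mem_setOf_eq, Finset.mem_range] at hj hj'
    dsimp only at heq
    rcases Nat.lt_trichotomy j j' with h | h | h
    · have := count_drop_lt (t := j+1) (u := u) (y := y) h hj'.1 hj'.2.2
      omega
    · exact h
    · have := count_drop_lt (t := j'+1) (u := u) (y := y) h hj.1 hj.2.2
      omega
  apply Finset.eq_of_subset_of_card_le hsub
  rw [Finset.card_image_of_injOn hinj, rank_card, Finset.card_range]

/-! ### MbF and MaF cards and images -/

lemma split_take' {u p s : List ℕ} {m : ℕ} (hu : u = p ++ m :: s) :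
    u.take (p.length + 1) = p ++ [m] := by
  conv_lhs => rw [hu, List.take_length_add_append 1]
  simp

lemma split_drop' {u p s : List ℕ} {m : ℕ} (hu : u = p ++ m :: s) :
    u.drop (p.length + 1) = s := by
  conv_lhs => rw [hu, List.drop_length_add_append 1]
  simp

lemma split_getD' {u p s : List ℕ} {m : ℕ} (hu : u = p ++ m :: s) :
    u.getD p.length 0 = m := by
  conv_lhs => rw [hu, List.getD_append_right _ _ _ _ (le_refl _), Nat.sub_self]
  rfl

lemma split_drop_sub {u p s : List ℕ} {m : ℕ} (hu : u = p ++ m :: s) {j : ℕ}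
    (hj : p.length + 1 ≤ j) : u.drop (j+1) = s.drop (j - p.length) := by
  have h1 : u = (p ++ [m]) ++ s := by rw [hu]; simp
  have h2 : j + 1 = (p ++ [m]).length + (j - p.length) := by simp; omega
  rw [h1, h2, List.drop_length_add_append]

lemma MbF_card (u : List ℕ) : (MbF u).card = u.count (maxVal u) := by
  have h : MbF u = (Finset.range u.length).filter
      (fun j => 0 ≤ j ∧ u.getD j 0 = maxVal u) := by
    apply Finset.filter_congr
    intro j _
    simp
  rw [h, rank_card, List.drop_zero]

lemma MbF_image (u : List ℕ) :
    (MbF u).image (fun j => (u.drop (j+1)).count (maxVal u))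
      = Finset.range (u.count (maxVal u)) := by
  have h : MbF u = (Finset.range u.length).filter
      (fun j => 0 ≤ j ∧ u.getD j 0 = maxVal u) := by
    apply Finset.filter_congr
    intro j _
    simp
  rw [h, rank_image, List.drop_zero]

lemma split_s_nil {u p s : List ℕ} (hu : u = p ++ maxVal u :: s) (hs : maxVal u ∉ s)
    (hm : maxVal u = 0) : s = [] := by
  cases s with
  | nil => rfl
  | cons a s' =>
    exfalso
    have ha : a ∈ u := by rw [hu]; simp
    have := le_maxVal ha
    rw [hm] at this hs
    simp at hs
    omega

lemma MaF_eq {u p s : List ℕ} (hu : u = p ++ maxVal u :: s) (hs : maxVal u ∉ s) :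
    MaF u = (Finset.range u.length).filter
      (fun j => p.length + 1 ≤ j ∧ u.getD j 0 = maxVal u - 1) := by
  ext j
  rw [mem_MaF, Finset.mem_filter, Finset.mem_range]
  constructor
  · rintro ⟨hj, hval, hnm⟩
    have hm1 : 1 ≤ maxVal u := by omega
    have hge : p.length ≤ j := by
      by_contra hcon
      apply hnm
      have hlen : p.length - (j+1) < (u.drop (j+1)).length := by
        rw [List.length_drop, hu]
        simp
        omega
      have : (u.drop (j+1)).getD (p.length - (j+1)) 0 = maxVal u := by
        rw [getD_drop, show j + 1 + (p.length - (j+1)) = p.length by omega, split_getD' hu]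
      rw [← this]
      exact getD_mem hlen
    have hne : j ≠ p.length := by
      intro hcon
      rw [hcon, split_getD' hu] at hval
      omega
    exact ⟨hj, by omega, by omega⟩
  · rintro ⟨hj, hge, hval⟩
    rcases Nat.eq_zero_or_pos (maxVal u) with hm | hm
    · exfalso
      have := split_s_nil hu hs hm
      subst this
      rw [hu] at hj
      simp at hj
      omega
    · refine ⟨hj, by omega, ?_⟩
      rw [split_drop_sub hu hge]
      intro hcon
      exact hs ((List.drop_suffix _ _).subset hcon)

lemma MaF_card {u p s : List ℕ} (hu : u = p ++ maxVal u :: s) (hs : maxVal u ∉ s) :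
    (MaF u).card = s.count (maxVal u - 1) := by
  rw [MaF_eq hu hs, rank_card, split_drop' hu]

lemma MaF_image {u p s : List ℕ} (hu : u = p ++ maxVal u :: s) (hs : maxVal u ∉ s) :
    (MaF u).image (fun j => (u.drop (j+1)).count (maxVal u - 1))
      = Finset.range (s.count (maxVal u - 1)) := by
  rw [MaF_eq hu hs, rank_image, split_drop' hu]

lemma capD_split {u p s : List ℕ} (hu : u = p ++ maxVal u :: s) (hs : maxVal u ∉ s) :
    capD u = u.count (maxVal u) + s.count (maxVal u - 1) := by
  rw [capD, suffM_eq hu rfl hs]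

/-! ### main children lemma -/

lemma children_mem_spec {u : List ℕ} (hAS : AS u) (hne : u ≠ []) :
    ∀ v ∈ childrenF u, AS v ∧ v.length = u.length + 1 ∧ parent v = u ∧
      1 ≤ capD v ∧ dinvL v = dinvL u + (capD v - 1) := by
  intro v hv
  rw [childrenF, Finset.mem_union, Finset.mem_union, Finset.mem_singleton] at hv
  rcases hv with (hv | hv) | hv
  · obtain ⟨j, hj, rfl⟩ := Finset.mem_image.1 hv
    obtain ⟨s1, s2, s3, s4, s5⟩ := typeI_spec hAS hj
    exact ⟨s1, s2, s3, by omega, by omega⟩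
  · obtain ⟨j, hj, rfl⟩ := Finset.mem_image.1 hv
    obtain ⟨s1, s2, s3, s4, s5⟩ := typeII_spec hAS hj
    exact ⟨s1, s2, s3, by omega, by omega⟩
  · subst hv
    obtain ⟨s1, s2, s3, s4, s5⟩ := typeIII_spec hAS hne
    exact ⟨s1, s2, s3, by omega, by omega⟩

lemma children_image_capD {u : List ℕ} (hAS : AS u) (hne : u ≠ []) :
    (childrenF u).image capD = (Finset.range (capD u + 1)).image (· + 1) := by
  obtain ⟨p, s, hu, hs⟩ := splitLast (maxVal_mem hne)
  have hcap := capD_split hu hs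
  rw [childrenF, Finset.image_union, Finset.image_union, Finset.image_singleton,
    Finset.image_image, Finset.image_image]
  have h1 : (MbF u).image (capD ∘ fun j => insA u j (maxVal u + 1))
      = (Finset.range (u.count (maxVal u))).image (· + 1) := by
    rw [← MbF_image u, Finset.image_image]
    apply Finset.image_congr
    intro j hj
    simp only [Function.comp_apply]
    rw [(typeI_spec hAS hj).2.2.2.1]
  have h2 : (MaF u).image (capD ∘ fun j => insA u j (maxVal u))
      = (Finset.range (s.count (maxVal u - 1))).image
          (fun r => u.count (maxVal u) + r + 1) := by
    rw [← MaF_image hu hs, Finset.image_image]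
    apply Finset.image_congr
    intro j hj
    simp only [Function.comp_apply]
    rw [(typeII_spec hAS hj).2.2.2.1]
  have h3 : capD (vIII u) = capD u + 1 := (typeIII_spec hAS hne).2.2.2.1
  rw [h1, h2, h3]
  ext x
  simp only [Finset.mem_union, Finset.mem_image, Finset.mem_range, Finset.mem_singleton]
  constructor
  · rintro ((⟨k, hk, rfl⟩ | ⟨k, hk, rfl⟩) | rfl)
    · exact ⟨k, by omega, rfl⟩
    · exact ⟨u.count (maxVal u) + k, by omega, by omega⟩
    · exact ⟨capD u, by omega, by omega⟩
  · rintro ⟨k, hk, rfl⟩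
    rcases Nat.lt_or_ge k (u.count (maxVal u)) with h | h
    · exact Or.inl (Or.inl ⟨k, h, rfl⟩)
    · rcases Nat.lt_or_ge k (capD u) with h' | h'
      · exact Or.inl (Or.inr ⟨k - u.count (maxVal u), by omega, by omega⟩)
      · exact Or.inr (by omega)

lemma children_card {u : List ℕ} (hAS : AS u) (hne : u ≠ []) :
    (childrenF u).card = capD u + 1 := by
  obtain ⟨p, s, hu, hs⟩ := splitLast (maxVal_mem hne)
  have hcap := capD_split hu hs
  have hub : (childrenF u).card ≤ capD u + 1 := by
    calc (childrenF u).card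
        ≤ ((MbF u).image (fun j => insA u j (maxVal u + 1))
            ∪ (MaF u).image (fun j => insA u j (maxVal u))).card + 1 := by
          rw [childrenF]
          exact le_trans (Finset.card_union_le _ _) (by simp)
      _ ≤ (MbF u).card + (MaF u).card + 1 := by
          have := Finset.card_union_le ((MbF u).image (fun j => insA u j (maxVal u + 1)))
            ((MaF u).image (fun j => insA u j (maxVal u)))
          have h1 := Finset.card_image_le (s := MbF u) (f := fun j => insA u j (maxVal u + 1))
          have h2 := Finset.card_image_le (s := MaF u) (f := fun j => insA u j (maxVal u))
          omega
      _ = capD u + 1 := by rw [MbF_card, MaF_card hu hs, hcap]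
  have hlb : capD u + 1 ≤ (childrenF u).card := by
    have h1 := Finset.card_image_le (s := childrenF u) (f := capD)
    rw [children_image_capD hAS hne, Finset.card_image_of_injective _ (add_left_injective 1), Finset.card_range] at h1
    omega
  omega

lemma children_injOn_capD {u : List ℕ} (hAS : AS u) (hne : u ≠ []) :
    Set.InjOn capD (childrenF u) := by
  rw [← Finset.card_image_iff, children_image_capD hAS hne, children_card hAS hne,
    Finset.card_image_of_injective _ (add_left_injective 1), Finset.card_range]

lemma children_count {u : List ℕ} (hAS : AS u) (hne : u ≠ []) (q r : ℕ) :
    ((childrenF u).filter (fun v => dinvL v = q ∧ capD v = r)).card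
      = if 1 ≤ r ∧ r ≤ capD u + 1 ∧ q = dinvL u + (r - 1) then 1 else 0 := by
  split_ifs with h
  · have hr : r ∈ (childrenF u).image capD := by
      rw [children_image_capD hAS hne]
      exact Finset.mem_image.2 ⟨r - 1, Finset.mem_range.2 (by omega), by omega⟩
    obtain ⟨v₀, hv₀, hcap₀⟩ := Finset.mem_image.1 hr
    rw [Finset.card_eq_one]
    refine ⟨v₀, ?_⟩
    ext v
    simp only [Finset.mem_filter, Finset.mem_singleton]
    constructor
    · rintro ⟨hvmem, _, hcv⟩
      exact children_injOn_capD hAS hne hvmem hv₀ (by rw [hcv, hcap₀])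
    · rintro rfl
      obtain ⟨_, _, _, hc1, hdi⟩ := children_mem_spec hAS hne _ hv₀
      exact ⟨hv₀, by omega, hcap₀⟩
  · rw [Finset.card_eq_zero, Finset.filter_eq_empty_iff]
    rintro v hv ⟨hdv, hcv⟩
    obtain ⟨_, _, _, hc1, hdi⟩ := children_mem_spec hAS hne v hv
    have hrin : capD v ∈ (childrenF u).image capD := Finset.mem_image_of_mem _ hv
    rw [children_image_capD hAS hne] at hrin
    obtain ⟨k, hk, hk2⟩ := Finset.mem_image.1 hrin
    rw [Finset.mem_range] at hk
    exact h ⟨by omega, by omega, by omega⟩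

/-! ### surjectivity: every area sequence is a child of its parent -/

lemma getD_getLast {p : List ℕ} (hp : p ≠ []) : p.getD (p.length - 1) 0 = p.getLast hp := by
  have h1 : p.length - 1 < p.length := by
    cases p with
    | nil => simp at hp
    | cons a l => simp
  rw [List.getD_eq_getElem?_getD, List.getElem?_eq_getElem h1, List.getLast_eq_getElem]
  rfl

lemma parent_spec {v : List ℕ} (hAS : AS v) (hlen : 2 ≤ v.length) :
    AS (parent v) ∧ (parent v).length + 1 = v.length ∧ parent v ≠ [] ∧
      v ∈ childrenF (parent v) := by
  have hvne : v ≠ [] := by intro h; rw [h] at hlen; simp at hlen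
  obtain ⟨p, s, hu, hs⟩ := splitLast (maxVal_mem hvne)
  have hpar : parent v = p ++ s := parent_eq hu rfl hs
  have hple : ∀ y ∈ p, y ≤ maxVal v := fun y hy => le_maxVal (by rw [hu]; simp [hy])
  have hsle : ∀ y ∈ s, y ≤ maxVal v := fun y hy => le_maxVal (by rw [hu]; simp [hy])
  rcases eq_or_ne p [] with rfl | hp
  · exfalso
    have hm0 : maxVal v = 0 := by
      have := hAS.1
      rw [hu] at this
      simpa using this
    have := split_s_nil hu hs hm0
    rw [hu, this] at hlen
    simp at hlen
  -- p ≠ []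
  have hchain := hAS.2
  rw [hu, List.isChain_append] at hchain
  obtain ⟨cp, cms, glue⟩ := hchain
  have hb_le : p.getLast hp ≤ maxVal v := hple _ (List.getLast_mem hp)
  have hjunc : maxVal v ≤ p.getLast hp + 1 := by
    have := glue (p.getLast hp) (by rw [List.getLast?_eq_getLast hp]; rfl) (maxVal v)
      (by simp)
    exact this
  have hcs : s.Chain' (fun a b => b ≤ a + 1) := (List.isChain_cons.1 cms).2
  have hASu : AS (p ++ s) := by
    constructor
    · rw [headD_append hp]
      have := hAS.1
      rw [hu, headD_append hp] at this
      exact this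
    · rw [List.isChain_append]
      refine ⟨cp, hcs, ?_⟩
      intro a ha y hy
      rw [List.getLast?_eq_getLast hp] at ha
      simp only [Option.mem_def, Option.some.injEq] at ha
      subst ha
      have : y ≤ maxVal v := hsle y (List.mem_of_mem_head? hy)
      omega
  have hlenu : (p ++ s).length + 1 = v.length := by rw [hu]; simp; omega
  have hune : p ++ s ≠ [] := by
    intro h
    rcases List.append_eq_nil_iff.1 h with ⟨h1, _⟩
    exact hp h1
  rw [hpar]
  refine ⟨hASu, hlenu, hune, ?_⟩
  rcases eq_or_ne (p.getLast hp) (maxVal v) with hbm | hbm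
  · -- type III
    have hmu : maxVal (p ++ s) = maxVal v := by
      apply le_antisymm
      · apply maxVal_le
        intro y hy
        rcases List.mem_append.1 hy with h | h
        · exact hple y h
        · exact hsle y h
      · rw [← hbm]
        exact le_maxVal (List.mem_append_left _ (List.getLast_mem hp))
    have hu' : p ++ s = p.dropLast ++ maxVal (p ++ s) :: s := by
      conv_lhs => rw [← List.dropLast_append_getLast hp]
      rw [hmu, hbm]
      simp
    have hveq : vIII (p ++ s) = v := by
      rw [vIII_eq hu' rfl (by rw [hmu]; exact hs), hu, hmu]
      conv_rhs => rw [← List.dropLast_append_getLast hp, hbm]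
      simp
    rw [childrenF, Finset.mem_union]
    exact Or.inr (Finset.mem_singleton.2 hveq.symm)
  · have hm1 : p.getLast hp + 1 = maxVal v := by omega
    have hplen : 1 ≤ p.length := List.length_pos_iff.mpr hp
    have hgetD : (p ++ s).getD (p.length - 1) 0 = p.getLast hp := by
      rw [List.getD_append _ _ _ _ (by omega), getD_getLast hp]
    have hjlen : p.length - 1 < (p ++ s).length := by
      rw [List.length_append]
      omega
    have hj1 : p.length - 1 + 1 = p.length := by omega
    have htake : (p ++ s).take (p.length - 1 + 1) = p := by rw [hj1, List.take_left]
    have hdrop : (p ++ s).drop (p.length - 1 + 1) = s := by rw [hj1, List.drop_left]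
    rcases Decidable.em (maxVal v ∈ p) with hmp | hmp
    · -- type II
      have hmu : maxVal (p ++ s) = maxVal v := by
        apply le_antisymm
        · apply maxVal_le
          intro y hy
          rcases List.mem_append.1 hy with h | h
          · exact hple y h
          · exact hsle y h
        · exact le_maxVal (List.mem_append_left _ hmp)
      have hjmem : p.length - 1 ∈ MaF (p ++ s) := by
        rw [mem_MaF, hmu, hdrop]
        exact ⟨hjlen, by rw [hgetD]; omega, hs⟩
      have hveq : insA (p ++ s) (p.length - 1) (maxVal (p ++ s)) = v := by
        rw [insA, htake, hdrop, hmu, ← hu]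
      rw [childrenF, Finset.mem_union, Finset.mem_union]
      exact Or.inl (Or.inr (Finset.mem_image.2 ⟨p.length - 1, hjmem, hveq⟩))
    · -- type I
      have hmu : maxVal (p ++ s) = p.getLast hp := by
        apply le_antisymm
        · apply maxVal_le
          intro y hy
          have hyle : y ≤ maxVal v := by
            rcases List.mem_append.1 hy with h | h
            · exact hple y h
            · exact hsle y h
          have hyne : y ≠ maxVal v := by
            intro hcon
            rcases List.mem_append.1 hy with h | h
            · exact hmp (hcon ▸ h)
            · exact hs (hcon ▸ h)
          omega
        · exact le_maxVal (List.mem_append_left _ (List.getLast_mem hp))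
      have hjmem : p.length - 1 ∈ MbF (p ++ s) := by
        rw [mem_MbF, hmu, hgetD]
        exact ⟨hjlen, rfl⟩
      have hveq : insA (p ++ s) (p.length - 1) (maxVal (p ++ s) + 1) = v := by
        rw [insA, htake, hdrop, hmu, hm1, ← hu]
      rw [childrenF, Finset.mem_union, Finset.mem_union]
      exact Or.inl (Or.inl (Finset.mem_image.2 ⟨p.length - 1, hjmem, hveq⟩))

/-! ### the finset of area sequences -/

def capA (u : List ℕ) : ℕ := u.getLastD 0 + 1

def F : ℕ → Finset (List ℕ)
  | 0 => {[]}
  | (n+1) => (F n).biUnion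
      (fun u => (Finset.range (if u = [] then 1 else capA u + 1)).image (fun a => u ++ [a]))

lemma AS_append_iff {u : List ℕ} {a : ℕ} :
    AS (u ++ [a]) ↔ (u = [] ∧ a = 0) ∨ (AS u ∧ u ≠ [] ∧ a ≤ u.getLastD 0 + 1) := by
  rcases eq_or_ne u [] with rfl | hu
  · simp [AS]
  · have hl? : u.getLast? = some (u.getLastD 0) := by
      rw [List.getLastD_eq_getLast?]
      cases h : u.getLast? with
      | none => exact absurd (List.getLast?_eq_none_iff.1 h) hu
      | some b => rfl
    constructor
    · rintro ⟨h0, hc⟩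
      rw [List.isChain_append] at hc
      refine Or.inr ⟨⟨?_, hc.1⟩, hu, ?_⟩
      · rw [headD_append hu] at h0
        exact h0
      · have := hc.2.2 _ hl? a (by simp)
        exact this
    · rintro (⟨rfl, _⟩ | ⟨⟨h0, hc⟩, _, ha⟩)
      · exact absurd rfl hu
      · constructor
        · rw [headD_append hu]
          exact h0
        · rw [List.isChain_append]
          refine ⟨hc, by simp, ?_⟩
          intro x hx y hy
          rw [hl?] at hx
          simp only [Option.mem_def, Option.some.injEq] at hx
          simp only [List.head?_cons, Option.mem_def, Option.some.injEq] at hy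
          subst hx; subst hy
          exact ha

lemma mem_F {n : ℕ} {v : List ℕ} : v ∈ F n ↔ AS v ∧ v.length = n := by
  induction n generalizing v with
  | zero =>
    simp only [F, Finset.mem_singleton, List.length_eq_zero_iff]
    constructor
    · rintro rfl; exact ⟨⟨rfl, List.isChain_nil⟩, rfl⟩
    · rintro ⟨_, rfl⟩; rfl
  | succ n ih =>
    simp only [F, Finset.mem_biUnion, Finset.mem_image, Finset.mem_range]
    constructor
    · rintro ⟨u, hu, a, ha, rfl⟩
      obtain ⟨hASu, hlen⟩ := ih.1 hu
      refine ⟨?_, by simp [hlen]⟩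
      rw [AS_append_iff]
      rcases eq_or_ne u [] with rfl | hune
      · simp at ha
        exact Or.inl ⟨rfl, by omega⟩
      · rw [if_neg hune, capA] at ha
        exact Or.inr ⟨hASu, hune, by omega⟩
    · rintro ⟨hASv, hlen⟩
      have hvne : v ≠ [] := by
        intro h
        rw [h] at hlen
        simp at hlen
      refine ⟨v.dropLast, ih.2 ⟨?_, ?_⟩, v.getLast hvne, ?_, ?_⟩
      · have h := hASv
        rw [← List.dropLast_append_getLast hvne, AS_append_iff] at h
        rcases h with ⟨h1, _⟩ | ⟨h1, _⟩
        · rw [h1]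
          exact ⟨rfl, List.isChain_nil⟩
        · exact h1
      · rw [List.length_dropLast, hlen]
        rfl
      · have h := hASv
        rw [← List.dropLast_append_getLast hvne, AS_append_iff] at h
        rcases h with ⟨h1, h2⟩ | ⟨_, _, h3⟩
        · rw [if_pos h1]
          omega
        · rw [if_neg (by rintro h; exact (by simpa [h] using ‹v.dropLast ≠ []›))]
          rw [capA]
          omega
      · exact List.dropLast_append_getLast hvne

/-! ### recursions -/

lemma F_succ_eq {n : ℕ} (hn : 1 ≤ n) : F (n+1) = (F n).biUnion childrenF := by
  ext v
  rw [mem_F, Finset.mem_biUnion]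
  constructor
  · rintro ⟨hAS, hlen⟩
    obtain ⟨h1, h2, h3, h4⟩ := parent_spec hAS (by omega)
    exact ⟨parent v, mem_F.2 ⟨h1, by omega⟩, h4⟩
  · rintro ⟨u, hu, hv⟩
    obtain ⟨hASu, hlenu⟩ := mem_F.1 hu
    have hune : u ≠ [] := by
      intro h
      rw [h] at hlenu
      simp at hlenu
      omega
    obtain ⟨h1, h2, _, _, _⟩ := children_mem_spec hASu hune v hv
    exact ⟨h1, by omega⟩

lemma dinv_count_rec {n : ℕ} (hn : 1 ≤ n) (q r : ℕ) :
    ((F (n+1)).filter (fun v => dinvL v = q ∧ capD v = r)).card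
      = ∑ u ∈ F n, if 1 ≤ r ∧ r ≤ capD u + 1 ∧ q = dinvL u + (r - 1) then 1 else 0 := by
  have hune : ∀ u ∈ F n, u ≠ [] := by
    intro u hu h
    obtain ⟨_, hlen⟩ := mem_F.1 hu
    rw [h] at hlen
    simp at hlen
    omega
  rw [F_succ_eq hn, Finset.filter_biUnion, Finset.card_biUnion]
  · apply Finset.sum_congr rfl
    intro u hu
    obtain ⟨hASu, _⟩ := mem_F.1 hu
    rw [children_count hASu (hune u hu) q r]
  · intro u₁ h₁ u₂ h₂ hne
    apply Finset.disjoint_left.2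
    intro v hv₁ hv₂
    rw [Finset.mem_filter] at hv₁ hv₂
    obtain ⟨hASu₁, _⟩ := mem_F.1 h₁
    obtain ⟨hASu₂, _⟩ := mem_F.1 h₂
    have p1 := (children_mem_spec hASu₁ (hune u₁ h₁) v hv₁.1).2.2.1
    have p2 := (children_mem_spec hASu₂ (hune u₂ h₂) v hv₂.1).2.2.1
    exact hne (p1 ▸ p2 ▸ rfl)

lemma area_count_rec {n : ℕ} (hn : 1 ≤ n) (q r : ℕ) :
    ((F (n+1)).filter (fun v => area v = q ∧ capA v = r)).card
      = ∑ u ∈ F n, if 1 ≤ r ∧ r ≤ capA u + 1 ∧ q = area u + (r - 1) then 1 else 0 := by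
  have hune : ∀ u ∈ F n, u ≠ [] := by
    intro u hu h
    obtain ⟨_, hlen⟩ := mem_F.1 hu
    rw [h] at hlen
    simp at hlen
    omega
  conv_lhs => rw [F]
  rw [Finset.filter_biUnion, Finset.card_biUnion]
  · apply Finset.sum_congr rfl
    intro u hu
    rw [if_neg (hune u hu), Finset.filter_image, Finset.card_image_of_injective _
      (fun a b h => by simpa using h : Function.Injective (fun a : ℕ => u ++ [a]))]
    have harea : ∀ a : ℕ, area (u ++ [a]) = area u + a := by
      intro a
      simp [area]
    have hcapA : ∀ a : ℕ, capA (u ++ [a]) = a + 1 := by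
      intro a
      rw [capA, List.getLastD_concat]
    have hset : (Finset.range (capA u + 1)).filter
          (fun a => area (u ++ [a]) = q ∧ capA (u ++ [a]) = r)
        = if 1 ≤ r ∧ r ≤ capA u + 1 ∧ q = area u + (r - 1) then {r-1} else ∅ := by
      split_ifs with h
      · ext a
        simp only [Finset.mem_filter, Finset.mem_range, harea, hcapA, Finset.mem_singleton]
        omega
      · ext a
        simp only [Finset.mem_filter, Finset.mem_range, harea, hcapA, Finset.notMem_empty,
          iff_false, not_and]
        intro h1 h2
        push_neg at h
        omega
    rw [hset]
    split_ifs <;> simp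
  · intro u₁ h₁ u₂ h₂ hne
    apply Finset.disjoint_left.2
    intro v hv₁ hv₂
    rw [Finset.mem_filter] at hv₁ hv₂
    obtain ⟨a, _, ha⟩ := Finset.mem_image.1 hv₁.1
    obtain ⟨b, _, hb⟩ := Finset.mem_image.1 hv₂.1
    apply hne
    have : u₁ = u₂ := by
      rw [← List.dropLast_concat (l₁ := u₁) (b := a), ← List.dropLast_concat (l₁ := u₂) (b := b),
        ha, hb]
    exact this

/-! ### bounds -/

lemma getLastD_mem {u : List ℕ} (h : u ≠ []) : u.getLastD 0 ∈ u := by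
  rw [List.getLastD_eq_getLast?, List.getLast?_eq_getLast h, Option.getD_some]
  exact List.getLast_mem h

lemma F_val_lt {n : ℕ} : ∀ u ∈ F n, ∀ b ∈ u, b < n := by
  induction n with
  | zero =>
    intro u hu b hb
    obtain ⟨_, hlen⟩ := mem_F.1 hu
    rw [List.length_eq_zero_iff] at hlen
    subst hlen
    simp at hb
  | succ n ih =>
    intro u hu b hb
    rw [F, Finset.mem_biUnion] at hu
    obtain ⟨u', hu', hmem⟩ := hu
    obtain ⟨a, ha, rfl⟩ := Finset.mem_image.1 hmem
    rw [Finset.mem_range] at ha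
    rcases List.mem_append.1 hb with h | h
    · exact lt_trans (ih u' hu' b h) (by omega)
    · simp only [List.mem_singleton] at h
      subst h
      rcases eq_or_ne u' [] with rfl | hne
      · simp at ha
        omega
      · rw [if_neg hne, capA] at ha
        have := ih u' hu' _ (getLastD_mem hne)
        omega

lemma capD_le {u : List ℕ} (h : u ≠ []) : capD u ≤ u.length := by
  obtain ⟨p, s, hu, hs⟩ := splitLast (maxVal_mem h)
  rw [capD_split hu hs]
  have h1 : u.count (maxVal u) ≤ p.length + 1 := by
    have h2 := List.count_append (a := maxVal u) (l₁ := p) (l₂ := maxVal u :: s)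
    rw [← hu, List.count_cons_self, List.count_eq_zero_of_not_mem hs] at h2
    have := List.count_le_length (a := maxVal u) (l := p)
    omega
  have h3 := List.count_le_length (a := maxVal u - 1) (l := s)
  have h4 : u.length = p.length + 1 + s.length := by rw [hu]; simp; omega
  omega

/-! ### the main induction -/

lemma main_pair : ∀ n, 1 ≤ n → ∀ q r,
    ((F n).filter (fun w => dinvL w = q ∧ capD w = r)).card
      = ((F n).filter (fun w => area w = q ∧ capA w = r)).card := by
  intro n
  induction n with
  | zero => omega
  | succ n ih =>
    intro _ q r
    rcases Nat.eq_zero_or_pos n with rfl | hn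
    · have h1 : F 1 = {[0]} := by
        rw [F]
        show Finset.biUnion {[]} _ = _
        rw [Finset.singleton_biUnion, if_pos rfl, Finset.range_one, Finset.image_singleton]
        rfl
      rw [h1, Finset.filter_singleton, Finset.filter_singleton,
        show dinvL [0] = 0 from rfl, show capD [0] = 1 from by decide,
        show area [0] = 0 from rfl, show capA [0] = 1 from rfl]
    · rw [dinv_count_rec hn, area_count_rec hn]
      by_cases hr : 1 ≤ r ∧ r - 1 ≤ q
      · set q' := q - (r - 1) with hq'
        set r' := r - 1 with hr'
        have hL : (∑ u ∈ F n, if 1 ≤ r ∧ r ≤ capD u + 1 ∧ q = dinvL u + (r - 1) then 1 else 0)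
            = ((F n).filter (fun u => dinvL u = q' ∧ r' ≤ capD u)).card := by
          rw [Finset.card_filter]
          apply Finset.sum_congr rfl
          intro u _
          exact if_congr (by omega) rfl rfl
        have hR : (∑ u ∈ F n, if 1 ≤ r ∧ r ≤ capA u + 1 ∧ q = area u + (r - 1) then 1 else 0)
            = ((F n).filter (fun u => area u = q' ∧ r' ≤ capA u)).card := by
          rw [Finset.card_filter]
          apply Finset.sum_congr rfl
          intro u _
          exact if_congr (by omega) rfl rfl
        rw [hL, hR]
        have hne : ∀ u ∈ F n, u ≠ [] := by
          intro u hu hcon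
          obtain ⟨_, hlen⟩ := mem_F.1 hu
          rw [hcon] at hlen
          simp at hlen
          omega
        have hfib1 : ((F n).filter (fun u => dinvL u = q' ∧ r' ≤ capD u)).card
            = ∑ b ∈ Finset.Icc r' (n+1),
                ((F n).filter (fun u => dinvL u = q' ∧ capD u = b)).card := by
          rw [Finset.card_eq_sum_card_fiberwise (f := capD) (t := Finset.Icc r' (n+1))
            (fun u hu => by
              rw [Finset.mem_coe, Finset.mem_filter] at hu
              rw [Finset.mem_coe, Finset.mem_Icc]
              obtain ⟨_, hlen⟩ := mem_F.1 hu.1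
              have h5 := capD_le (hne u hu.1)
              have h6 := hu.2.2
              omega)]
          apply Finset.sum_congr rfl
          intro b hb
          rw [Finset.mem_Icc] at hb
          congr 1
          ext u
          simp only [Finset.mem_filter]
          constructor
          · rintro ⟨⟨h1, h2, _⟩, h4⟩
            exact ⟨h1, h2, h4⟩
          · rintro ⟨h1, h2, h4⟩
            exact ⟨⟨h1, h2, by omega⟩, h4⟩
        have hfib2 : ((F n).filter (fun u => area u = q' ∧ r' ≤ capA u)).card
            = ∑ b ∈ Finset.Icc r' (n+1),
                ((F n).filter (fun u => area u = q' ∧ capA u = b)).card := by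
          rw [Finset.card_eq_sum_card_fiberwise (f := capA) (t := Finset.Icc r' (n+1))
            (fun u hu => by
              rw [Finset.mem_coe, Finset.mem_filter] at hu
              rw [Finset.mem_coe, Finset.mem_Icc]
              obtain ⟨_, hlen⟩ := mem_F.1 hu.1
              have h5 := F_val_lt u hu.1 _ (getLastD_mem (hne u hu.1))
              have h6 := hu.2.2
              rw [capA] at h6 ⊢
              omega)]
          apply Finset.sum_congr rfl
          intro b hb
          rw [Finset.mem_Icc] at hb
          congr 1
          ext u
          simp only [Finset.mem_filter]
          constructor
          · rintro ⟨⟨h1, h2, _⟩, h4⟩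
            exact ⟨h1, h2, h4⟩
          · rintro ⟨h1, h2, h4⟩
            exact ⟨⟨h1, h2, by omega⟩, h4⟩
        rw [hfib1, hfib2]
        exact Finset.sum_congr rfl (fun b _ => ih hn q' b)
      · rw [Finset.sum_eq_zero, Finset.sum_eq_zero]
        · intro u _
          rw [if_neg]
          omega
        · intro u _
          rw [if_neg]
          omega

lemma final_counts (n q : ℕ) :
    ((F n).filter (fun w => dinvL w = q)).card = ((F n).filter (fun w => area w = q)).card := by
  rcases Nat.eq_zero_or_pos n with rfl | hn
  · have h0 : F 0 = {([] : List ℕ)} := rfl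
    rw [h0, Finset.filter_singleton, Finset.filter_singleton,
      show dinvL [] = 0 from rfl, show area [] = 0 from rfl]
  · have hne : ∀ u ∈ F n, u ≠ [] := by
      intro u hu hcon
      obtain ⟨_, hlen⟩ := mem_F.1 hu
      rw [hcon] at hlen
      simp at hlen
      omega
    have hfib1 : ((F n).filter (fun w => dinvL w = q)).card
        = ∑ b ∈ Finset.Icc 0 (n+1), ((F n).filter (fun w => dinvL w = q ∧ capD w = b)).card := by
      rw [Finset.card_eq_sum_card_fiberwise (f := capD) (t := Finset.Icc 0 (n+1))
        (fun u hu => by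
          rw [Finset.mem_coe, Finset.mem_filter] at hu
          rw [Finset.mem_coe, Finset.mem_Icc]
          obtain ⟨_, hlen⟩ := mem_F.1 hu.1
          have := capD_le (hne u hu.1)
          omega)]
      apply Finset.sum_congr rfl
      intro b _
      congr 1
      ext u
      simp only [Finset.mem_filter]
      tauto
    have hfib2 : ((F n).filter (fun w => area w = q)).card
        = ∑ b ∈ Finset.Icc 0 (n+1), ((F n).filter (fun w => area w = q ∧ capA w = b)).card := by
      rw [Finset.card_eq_sum_card_fiberwise (f := capA) (t := Finset.Icc 0 (n+1))
        (fun u hu => by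
          rw [Finset.mem_coe, Finset.mem_filter] at hu
          rw [Finset.mem_coe, Finset.mem_Icc]
          obtain ⟨_, hlen⟩ := mem_F.1 hu.1
          have := F_val_lt u hu.1 _ (getLastD_mem (hne u hu.1))
          rw [capA]
          omega)]
      apply Finset.sum_congr rfl
      intro b _
      congr 1
      ext u
      simp only [Finset.mem_filter]
      tauto
    rw [hfib1, hfib2]
    exact Finset.sum_congr rfl (fun b _ => main_pair n hn q b)


/-- The number of area sequences of size `n` with area `q` equals the number of
area sequences of size `n` with dinv `q`. -/
theorem card_area_eq_card_dinv (n q : ℕ) :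
    Nat.card {w : List ℕ // IsAreaSeq w ∧ w.length = n ∧ area w = q} =
      Nat.card {w : List ℕ // IsAreaSeq w ∧ w.length = n ∧ dinv w = q} := by
  have e1 : ∀ w : List ℕ,
      (IsAreaSeq w ∧ w.length = n ∧ area w = q) ↔ w ∈ (F n).filter (fun w => area w = q) := by
    intro w
    rw [Finset.mem_filter, mem_F, AS_iff]
    tauto
  have e2 : ∀ w : List ℕ,
      (IsAreaSeq w ∧ w.length = n ∧ dinv w = q) ↔ w ∈ (F n).filter (fun w => dinvL w = q) := by
    intro w
    rw [Finset.mem_filter, mem_F, AS_iff, dinv_eq_dinvL]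
    tauto
  calc Nat.card {w : List ℕ // IsAreaSeq w ∧ w.length = n ∧ area w = q}
      = Nat.card {w : List ℕ // w ∈ (F n).filter (fun w => area w = q)} :=
        Nat.card_congr (Equiv.subtypeEquivRight e1)
    _ = ((F n).filter (fun w => area w = q)).card := Nat.card_eq_finsetCard _
    _ = ((F n).filter (fun w => dinvL w = q)).card := (final_counts n q).symm
    _ = Nat.card {w : List ℕ // w ∈ (F n).filter (fun w => dinvL w = q)} :=
        (Nat.card_eq_finsetCard _).symm
    _ = Nat.card {w : List ℕ // IsAreaSeq w ∧ w.length = n ∧ dinv w = q} :=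
        (Nat.card_congr (Equiv.subtypeEquivRight e2)).symm
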